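/- Let μ be a finite measure on a measurable space X, let φ, v : X → ℝ be bounded measurable functions, and let f_1, …, f_N : X → ℂ be bounded measurable functions that are orthonormal in L²(e^{-2φ}μ), i.e. ∫_X f_i · conj(f_j) · e^{-2φ} dμ = δ_{ij}. For t ∈ ℝ let G(t) be the N×N matrix with entries G(t)_{ij} = ∫_X f_i · conj(f_j) · e^{-2(φ + t v)} dμ. Then the function t ↦ log det G(t) is differentiable at t = 0 with derivative equal to −2 ∫_X v(x) · (∑_{i=1}^N |f_i(x)|²) · e^{-2φ(x)} dμ(x). -/

import Mathlib

open MeasureTheory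

lemma integrable_bdd {X : Type*} {E : Type*} [MeasurableSpace X] [NormedAddCommGroup E]
    (μ : Measure X) [IsFiniteMeasure μ] {h : X → E} (hm : AEStronglyMeasurable h μ)
    {C : ℝ} (hb : ∀ x, ‖h x‖ ≤ C) : Integrable h μ :=
  ⟨hm, HasFiniteIntegral.of_bounded (Filter.Eventually.of_forall hb)⟩

lemma aux_entry {X : Type*} [MeasurableSpace X] (μ : Measure X) [IsFiniteMeasure μ]
    (φ v : X → ℝ) (hφm : Measurable φ) (hvm : Measurable v)
    {Cφ Cv : ℝ} (hCφ : ∀ x, |φ x| ≤ Cφ) (hCv : ∀ x, |v x| ≤ Cv)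
    (a b : X → ℂ) (ham : Measurable a) (hbm : Measurable b)
    {Ca Cb : ℝ} (hCa : ∀ x, ‖a x‖ ≤ Ca) (hCb : ∀ x, ‖b x‖ ≤ Cb) :
    HasDerivAt
      (fun t : ℝ => ∫ x, a x * (starRingEnd ℂ) (b x) *
        (Real.exp (-2 * (φ x + t * v x)) : ℂ) ∂μ)
      (∫ x, a x * (starRingEnd ℂ) (b x) *
        ((-2 * v x * Real.exp (-2 * φ x) : ℝ) : ℂ) ∂μ) 0 := by
  classical
  set F : ℝ → X → ℂ := fun t x =>
    a x * (starRingEnd ℂ) (b x) * (Real.exp (-2 * (φ x + t * v x)) : ℂ) with hF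
  set F' : ℝ → X → ℂ := fun t x =>
    a x * (starRingEnd ℂ) (b x) * ((-2 * v x * Real.exp (-2 * (φ x + t * v x)) : ℝ) : ℂ) with hF'
  have hconjm : Measurable fun x => (starRingEnd ℂ) (b x) :=
    continuous_star.measurable.comp hbm
  have hmeasF : ∀ t, Measurable (F t) := by
    intro t
    exact (ham.mul hconjm).mul (Complex.measurable_ofReal.comp
      (((hφm.add (hvm.const_mul t)).const_mul (-2)).exp))
  have hmeasF' : ∀ t, Measurable (F' t) := by
    intro t
    exact (ham.mul hconjm).mul (Complex.measurable_ofReal.comp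
      ((hvm.const_mul (-2)).mul (((hφm.add (hvm.const_mul t)).const_mul (-2)).exp)))
  have hdiff : ∀ (x : X), ∀ t : ℝ, HasDerivAt (fun s => F s x) (F' t x) t := by
    intro x t
    have h1 : HasDerivAt (fun s : ℝ => -2 * (φ x + s * v x)) (-2 * v x) t := by
      simpa using (((hasDerivAt_id t).mul_const (v x)).const_add (φ x)).const_mul (-2)
    have h3 := (h1.exp.ofReal_comp).const_mul (a x * (starRingEnd ℂ) (b x))
    exact h3.congr_deriv (by simp only [hF']; push_cast; ring)
  have hnormF' : ∀ (x : X), ∀ t ∈ Metric.ball (0:ℝ) 1,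
      ‖F' t x‖ ≤ Ca * Cb * (2 * Cv * Real.exp (2 * Cφ + 2 * Cv)) := by
    intro x t ht
    have ht1 : |t| ≤ 1 := by
      rw [Metric.mem_ball, Real.dist_eq, sub_zero] at ht; exact ht.le
    have hCa0 : (0:ℝ) ≤ Ca := le_trans (norm_nonneg _) (hCa x)
    have hCb0 : (0:ℝ) ≤ Cb := le_trans (norm_nonneg _) (hCb x)
    have hCv0 : (0:ℝ) ≤ Cv := le_trans (abs_nonneg _) (hCv x)
    have htv : |t * v x| ≤ Cv := by
      rw [abs_mul]
      calc |t| * |v x| ≤ 1 * Cv :=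
            mul_le_mul ht1 (hCv x) (abs_nonneg _) zero_le_one
        _ = Cv := one_mul _
    have hexp : Real.exp (-2 * (φ x + t * v x)) ≤ Real.exp (2 * Cφ + 2 * Cv) := by
      apply Real.exp_le_exp.2
      have h4 := abs_le.1 (hCφ x)
      have h5 := abs_le.1 htv
      nlinarith
    have hnorm : ‖F' t x‖ = ‖a x‖ * ‖b x‖ *
        |(-2 * v x * Real.exp (-2 * (φ x + t * v x)))| := by
      simp only [hF', norm_mul, Complex.norm_conj, Complex.norm_real, Real.norm_eq_abs, abs_mul]
    rw [hnorm]
    have habs : |(-2 * v x * Real.exp (-2 * (φ x + t * v x)))| ≤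
        2 * Cv * Real.exp (2 * Cφ + 2 * Cv) := by
      rw [abs_mul, abs_mul]
      rw [show |(-2 : ℝ)| = 2 by norm_num, abs_of_pos (Real.exp_pos _)]
      exact mul_le_mul (by linarith [hCv x]) hexp (Real.exp_pos _).le (by linarith)
    exact mul_le_mul (mul_le_mul (hCa x) (hCb x) (norm_nonneg _) hCa0)
      habs (abs_nonneg _) (by positivity)
  have hFint : Integrable (F 0) μ := by
    apply integrable_bdd μ (hmeasF 0).aestronglyMeasurable
      (C := Ca * Cb * Real.exp (2 * Cφ + 2 * Cv))
    intro x
    have hCa0 : (0:ℝ) ≤ Ca := le_trans (norm_nonneg _) (hCa x)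
    have hCv0 : (0:ℝ) ≤ Cv := le_trans (abs_nonneg _) (hCv x)
    have hexp : Real.exp (-2 * (φ x + 0 * v x)) ≤ Real.exp (2 * Cφ + 2 * Cv) := by
      apply Real.exp_le_exp.2
      have h4 := abs_le.1 (hCφ x)
      nlinarith
    have hnorm : ‖F 0 x‖ = ‖a x‖ * ‖b x‖ *
        |Real.exp (-2 * (φ x + 0 * v x))| := by
      simp only [hF, norm_mul, Complex.norm_conj, Complex.norm_real, Real.norm_eq_abs]
    have hCb0 : (0:ℝ) ≤ Cb := le_trans (norm_nonneg _) (hCb x)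
    rw [hnorm, abs_of_pos (Real.exp_pos _)]
    apply mul_le_mul _ hexp (Real.exp_pos _).le (mul_nonneg hCa0 hCb0)
    exact mul_le_mul (hCa x) (hCb x) (norm_nonneg _) hCa0
  have key : Integrable (F' 0) μ ∧
      HasDerivAt (fun t => ∫ x, F t x ∂μ) (∫ x, F' 0 x ∂μ) 0 := by
    apply hasDerivAt_integral_of_dominated_loc_of_deriv_le (s := Metric.ball 0 1)
      (bound := fun _ => Ca * Cb * (2 * Cv * Real.exp (2 * Cφ + 2 * Cv))) (Metric.ball_mem_nhds 0 one_pos)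
    · exact Filter.Eventually.of_forall fun t => (hmeasF t).aestronglyMeasurable
    · exact hFint
    · exact (hmeasF' 0).aestronglyMeasurable
    · exact Filter.Eventually.of_forall fun x t ht => hnormF' x t ht
    · exact integrable_const _
    · exact Filter.Eventually.of_forall fun x t _ => hdiff x t
  have h := key.2
  simp only [hF, hF'] at h
  simpa only [zero_mul, add_zero] using h


lemma aux2 {N : ℕ} (G D : Fin N → Fin N → ℂ) (h : ∀ i j, G i j = if i = j then 1 else 0) :
    ∑ σ : Equiv.Perm (Fin N), ((Equiv.Perm.sign σ : ℤ) : ℂ) *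
      ∑ k, (∏ j ∈ Finset.univ.erase k, G (σ j) j) • D (σ k) k = ∑ k, D k k := by
  classical
  rw [Finset.sum_eq_single (1 : Equiv.Perm (Fin N))]
  · simp [h]
  · intro σ _ hσ
    have hz : ∀ k : Fin N, (∏ j ∈ Finset.univ.erase k, G (σ j) j) = 0 := by
      intro k
      obtain ⟨a, ha⟩ : ∃ a, σ a ≠ a := by
        by_contra hc; push_neg at hc; exact hσ (Equiv.ext hc)
      by_cases hak : a = k
      · subst hak
        set b := σ⁻¹ a with hbdef
        have hb1 : σ b = a := σ.apply_symm_apply a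
        have hbk : b ≠ a := by
          intro hh; apply ha; rw [← hh] at hb1 ⊢; exact hb1
        have hbb : σ b ≠ b := by rw [hb1]; exact fun hh => hbk hh.symm
        exact Finset.prod_eq_zero (Finset.mem_erase.2 ⟨hbk, Finset.mem_univ b⟩)
          (by rw [h]; exact if_neg hbb)
      · exact Finset.prod_eq_zero (Finset.mem_erase.2 ⟨hak, Finset.mem_univ a⟩)
          (by rw [h]; exact if_neg ha)
    simp [hz]
  · intro h1; exact absurd (Finset.mem_univ _) h1


lemma aux3 {N : ℕ} (g : Fin N → Fin N → ℝ → ℂ) (d : Fin N → Fin N → ℂ)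
    (hg : ∀ i j, HasDerivAt (g i j) (d i j) 0)
    (h0 : ∀ i j, g i j 0 = if i = j then 1 else 0) :
    HasDerivAt (fun t => Real.log ((Matrix.of fun i j => g i j t).det).re)
      ((∑ k, d k k).re) 0 := by
  classical
  have expand : ∀ t : ℝ, (Matrix.of fun i j => g i j t).det
      = ∑ σ : Equiv.Perm (Fin N), ((Equiv.Perm.sign σ : ℤ) : ℂ) * ∏ i, g (σ i) i t := fun t => by
    rw [Matrix.det_apply']; rfl
  have hprod : ∀ σ : Equiv.Perm (Fin N), HasDerivAt (fun t => ∏ i, g (σ i) i t)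
      (∑ k, (∏ j ∈ Finset.univ.erase k, g (σ j) j 0) • d (σ k) k) 0 :=
    fun σ => HasDerivAt.fun_finsetProd fun k _ => hg (σ k) k
  have H : HasDerivAt
      (fun t => ∑ σ : Equiv.Perm (Fin N), ((Equiv.Perm.sign σ : ℤ) : ℂ) * ∏ i, g (σ i) i t)
      (∑ σ : Equiv.Perm (Fin N), ((Equiv.Perm.sign σ : ℤ) : ℂ) *
        ∑ k, (∏ j ∈ Finset.univ.erase k, g (σ j) j 0) • d (σ k) k) 0 :=
    HasDerivAt.fun_sum fun σ _ => (hprod σ).const_mul _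
  rw [aux2 (fun i j => g i j 0) d h0] at H
  have hdet : HasDerivAt (fun t => (Matrix.of fun i j => g i j t).det) (∑ k, d k k) 0 :=
    H.congr_of_eventuallyEq (Filter.Eventually.of_forall expand)
  have hre : HasDerivAt (fun t => ((Matrix.of fun i j => g i j t).det).re)
      ((∑ k, d k k).re) 0 := by
    simpa [Function.comp_def] using Complex.reCLM.hasFDerivAt.comp_hasDerivAt 0 hdet
  have h1 : ((Matrix.of fun i j => g i j 0).det).re = 1 := by
    have hid : (Matrix.of fun i j => g i j 0) = (1 : Matrix (Fin N) (Fin N) ℂ) := by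
      ext i j; simp [h0 i j, Matrix.one_apply]
    rw [hid, Matrix.det_one]; simp
  have hlog : HasDerivAt Real.log 1
      ((fun t => ((Matrix.of fun i j => g i j t).det).re) 0) := by
    simp only [h1]
    simpa using Real.hasDerivAt_log one_ne_zero
  simpa [Function.comp_def] using hlog.comp 0 hre

/-- Differentiability of `t ↦ log det G(t)` at `t = 0` for the Gram matrices of a
family orthonormal with respect to the weighted measure `e^{-2φ} μ`, with derivative
`-2 ∫ v ρ e^{-2φ} dμ`, where `ρ = ∑ |f i|²` is the Bergman distortion function. -/
theorem stmt_9 {X : Type*} [MeasurableSpace X] (μ : Measure X) [IsFiniteMeasure μ]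
    (N : ℕ) (hN : 1 ≤ N)
    (φ v : X → ℝ) (hφm : Measurable φ) (hvm : Measurable v)
    (hφb : ∃ C, ∀ x, |φ x| ≤ C) (hvb : ∃ C, ∀ x, |v x| ≤ C)
    (f : Fin N → X → ℂ)
    (hmeas : ∀ i, Measurable (f i)) (hfb : ∀ i, ∃ C, ∀ x, ‖f i x‖ ≤ C)
    (horth : ∀ i j, ∫ x, f i x * (starRingEnd ℂ) (f j x) * (Real.exp (-2 * φ x) : ℂ) ∂μ =
      if i = j then 1 else 0) :
    HasDerivAt (fun t : ℝ => Real.log ((Matrix.of fun i j =>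
        ∫ x, f i x * (starRingEnd ℂ) (f j x) *
          (Real.exp (-2 * (φ x + t * v x)) : ℂ) ∂μ).det).re)
      (-2 * ∫ x, v x * (∑ i, ‖f i x‖ ^ 2) * Real.exp (-2 * φ x) ∂μ) 0 := by
  classical
  obtain ⟨Cφ₀, hCφ₀⟩ := hφb
  obtain ⟨Cv₀, hCv₀⟩ := hvb
  choose Cf hCf using hfb
  have hCφ : ∀ x, |φ x| ≤ |Cφ₀| := fun x => (hCφ₀ x).trans (le_abs_self _)
  have hCv : ∀ x, |v x| ≤ |Cv₀| := fun x => (hCv₀ x).trans (le_abs_self _)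
  have hCf' : ∀ i x, ‖f i x‖ ≤ |Cf i| :=
    fun i x => (hCf i x).trans (le_abs_self _)
  set d : Fin N → Fin N → ℂ := fun i j => ∫ x, f i x * (starRingEnd ℂ) (f j x) *
    ((-2 * v x * Real.exp (-2 * φ x) : ℝ) : ℂ) ∂μ with hd_def
  have hg : ∀ i j, HasDerivAt (fun t : ℝ => ∫ x, f i x * (starRingEnd ℂ) (f j x) *
      (Real.exp (-2 * (φ x + t * v x)) : ℂ) ∂μ) (d i j) 0 :=
    fun i j => aux_entry μ φ v hφm hvm hCφ hCv (f i) (f j) (hmeas i) (hmeas j)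
      (hCf' i) (hCf' j)
  have h0 : ∀ i j, (∫ x, f i x * (starRingEnd ℂ) (f j x) *
      (Real.exp (-2 * (φ x + (0:ℝ) * v x)) : ℂ) ∂μ) = if i = j then 1 else 0 := by
    intro i j; simpa using horth i j
  have main := aux3 (fun i j t => ∫ x, f i x * (starRingEnd ℂ) (f j x) *
      (Real.exp (-2 * (φ x + t * v x)) : ℂ) ∂μ) d hg h0
  -- now compute the derivative value
  have hd : ∀ k, d k k =
      ((∫ x, ‖f k x‖ ^ 2 * (-2 * v x * Real.exp (-2 * φ x)) ∂μ : ℝ) : ℂ) := by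
    intro k
    simp only [hd_def]
    have h1 : (∫ x, f k x * (starRingEnd ℂ) (f k x) *
        ((-2 * v x * Real.exp (-2 * φ x) : ℝ) : ℂ) ∂μ) =
        ∫ x, ((‖f k x‖ ^ 2 * (-2 * v x * Real.exp (-2 * φ x)) : ℝ) : ℂ) ∂μ := by
      apply integral_congr_ae
      apply Filter.Eventually.of_forall
      intro x
      dsimp only
      rw [Complex.mul_conj, ← Complex.sq_norm]
      push_cast
      ring
    rw [h1]
    exact integral_ofReal
  have hint : ∀ k : Fin N, Integrable
      (fun x => ‖f k x‖ ^ 2 * (-2 * v x * Real.exp (-2 * φ x))) μ := by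
    intro k
    have hmk : AEStronglyMeasurable
        (fun x => ‖f k x‖ ^ 2 * (-2 * v x * Real.exp (-2 * φ x))) μ := by
      apply Measurable.aestronglyMeasurable
      exact ((continuous_norm.measurable.comp (hmeas k)).pow_const 2).mul
        ((hvm.const_mul (-2)).mul ((hφm.const_mul (-2)).exp))
    apply integrable_bdd μ hmk (C := |Cf k| ^ 2 * (2 * |Cv₀| * Real.exp (2 * |Cφ₀|)))
    · intro x
      rw [Real.norm_eq_abs, abs_mul]
      have h1 : |‖f k x‖ ^ 2| ≤ |Cf k| ^ 2 := by
        rw [abs_of_nonneg (by positivity)]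
        exact pow_le_pow_left₀ (norm_nonneg _) (hCf' k x) 2
      have h2 : |(-2 * v x * Real.exp (-2 * φ x))| ≤ 2 * |Cv₀| * Real.exp (2 * |Cφ₀|) := by
        rw [abs_mul, abs_mul, show |(-2:ℝ)| = 2 by norm_num, abs_of_pos (Real.exp_pos _)]
        have hexp : Real.exp (-2 * φ x) ≤ Real.exp (2 * |Cφ₀|) := by
          apply Real.exp_le_exp.2
          have := abs_le.1 (hCφ x)
          linarith
        exact mul_le_mul (by linarith [hCv x]) hexp (Real.exp_pos _).le
          (by positivity)
      exact mul_le_mul h1 h2 (abs_nonneg _) (by positivity)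
  have hval : (∑ k, d k k).re =
      -2 * ∫ x, v x * (∑ i, ‖f i x‖ ^ 2) * Real.exp (-2 * φ x) ∂μ := by
    have e1 : (∑ k, d k k) = ((∑ k, ∫ x, ‖f k x‖ ^ 2 *
        (-2 * v x * Real.exp (-2 * φ x)) ∂μ : ℝ) : ℂ) := by
      rw [Finset.sum_congr rfl fun k _ => hd k]
      push_cast
      rfl
    rw [e1, Complex.ofReal_re]
    rw [← integral_finset_sum _ fun k _ => hint k]
    rw [← integral_const_mul]
    apply integral_congr_ae
    apply Filter.Eventually.of_forall
    intro x
    dsimp only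
    rw [← Finset.sum_mul]
    ring
  rw [← hval]
  exact main
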